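/- Let Ω ⊆ Ā be non-empty and a ∈ Φ^red. Then f_Ω(a) = +∞ if and only if there exists a face F = F_Y^Δ ∈ Σ with Ω ∩ A_F ≠ ∅ such that one of the following holds: either a ∈ ⟨Y⟩ and a(Ω ∩ A_F) is unbounded from below (elements of ⟨Y⟩ being viewed as linear forms on A_F), or a ∉ ⟨Y⟩ and there exist λ ∈ Λ with [λ₀(Δ) − λ] ⊆ Y and a positive integer l such that λ + l·a ∈ Λ. -/

import Mathlib

/-!
Common setup for Werner, "Compactifications of Bruhat-Tits buildings associated to
linear representations":  a finite-dimensional real vector space `A` (the apartment),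
a root system `Φ` in the dual space together with a Weyl-group invariant inner
product, a finite Weyl-invariant set `Λ` of (K-)weights, and for every basis `Δ`
of `Φ` a highest weight `lam0 Δ ∈ Λ`.
-/

open Pointwise Filter Topology Bornology
open scoped Classical

noncomputable section

/-- A set `M` of linear forms is *connected* if the graph with vertex set `M` and an
edge between `m` and `n` iff `inn m n ≠ 0` is connected. -/
def GraphConnected {D : Type*} (inn : D → D → ℝ) (M : Set D) : Prop :=
  ∀ m ∈ M, ∀ n ∈ M,
    Relation.ReflTransGen (fun x y => x ∈ M ∧ y ∈ M ∧ inn x y ≠ 0) m n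

/-- The coefficients of `μ` as a linear combination of the elements of `Δ` (chosen
arbitrarily if one exists; it is unique when `Δ` is linearly independent). -/
noncomputable def coeffs {A : Type*} [AddCommGroup A] [Module ℝ A]
    (Δ : Finset (Module.Dual ℝ A)) (μ : Module.Dual ℝ A) : Module.Dual ℝ A → ℝ :=
  if h : ∃ n : Module.Dual ℝ A → ℝ, μ = ∑ b ∈ Δ, n b • b then h.choose else fun _ => 0

/-- The support `[μ]` of `μ` with respect to the basis `Δ`: the set of elements of `Δ`
whose coefficient in `μ` is nonzero. -/
noncomputable def supp {A : Type*} [AddCommGroup A] [Module ℝ A]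
    (Δ : Finset (Module.Dual ℝ A)) (μ : Module.Dual ℝ A) : Finset (Module.Dual ℝ A) :=
  Δ.filter fun a => coeffs Δ μ a ≠ 0

/-- Raw data: a finite set `Φ` of roots in the dual of `A`, a product `inn` on the dual,
a finite set `Λ` of weights, and a highest weight `lam0 Δ` for every basis `Δ`. -/
structure RootWeightData (A : Type*) [NormedAddCommGroup A] [NormedSpace ℝ A]
    [FiniteDimensional ℝ A] where
  Φ : Finset (Module.Dual ℝ A)
  inn : Module.Dual ℝ A → Module.Dual ℝ A → ℝ
  Λ : Finset (Module.Dual ℝ A)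
  lam0 : Finset (Module.Dual ℝ A) → Module.Dual ℝ A

namespace RootWeightData

variable {A : Type*} [NormedAddCommGroup A] [NormedSpace ℝ A] [FiniteDimensional ℝ A]
variable (S : RootWeightData A)

/-- The reflection associated to the root `a`. -/
def refl (a : Module.Dual ℝ A) : Function.End (Module.Dual ℝ A) :=
  fun x => x - (2 * S.inn x a / S.inn a a) • a

/-- The Weyl group `W`, generated by the reflections in the roots. -/
def weyl : Submonoid (Function.End (Module.Dual ℝ A)) :=
  Submonoid.closure {f | ∃ a ∈ S.Φ, f = S.refl a}

/-- `Δ` is a basis of the root system `Φ`: a linearly independent subset of `Φ` such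
that every root is a nonnegative or nonpositive linear combination of `Δ`. -/
def IsBase (Δ : Finset (Module.Dual ℝ A)) : Prop :=
  (↑Δ : Set (Module.Dual ℝ A)) ⊆ (S.Φ : Set (Module.Dual ℝ A)) ∧
  LinearIndependent ℝ (fun a : (Δ : Set (Module.Dual ℝ A)) => (a : Module.Dual ℝ A)) ∧
  ∀ a ∈ S.Φ,
    (∃ n : Module.Dual ℝ A → ℝ, (∀ b ∈ Δ, 0 ≤ n b) ∧ a = ∑ b ∈ Δ, n b • b) ∨
    (∃ n : Module.Dual ℝ A → ℝ, (∀ b ∈ Δ, 0 ≤ n b) ∧ a = -∑ b ∈ Δ, n b • b)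

/-- `Y` is an admissible subset of the basis `Δ`: `Y ⊆ Δ` and `Y ∪ {λ₀(Δ)}` is
connected. -/
def Admissible (Δ Y : Finset (Module.Dual ℝ A)) : Prop :=
  Y ⊆ Δ ∧ GraphConnected S.inn ((↑Y : Set (Module.Dual ℝ A)) ∪ {S.lam0 Δ})

end RootWeightData

/-- The whole setting of Werner's paper: the data of `RootWeightData`, where `Φ` is a
(crystallographic, possibly non-reduced) root system spanning the dual of `A`, `inn` is
a Weyl-invariant inner product, `Λ` is a finite Weyl-invariant set of weights, and
`lam0` picks, Weyl-equivariantly, a highest weight for each basis, dominating all of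
`Λ`; moreover a subset of a basis is admissible iff it is the support of
`λ₀(Δ) - λ` for some weight `λ`. -/
structure RootWeightSystem (A : Type*) [NormedAddCommGroup A] [NormedSpace ℝ A]
    [FiniteDimensional ℝ A] extends RootWeightData A where
  inn_symm : ∀ x y, inn x y = inn y x
  inn_add_left : ∀ x y z, inn (x + y) z = inn x z + inn y z
  inn_smul_left : ∀ (c : ℝ) (x y), inn (c • x) y = c * inn x y
  inn_pos : ∀ x, x ≠ 0 → 0 < inn x x
  root_ne_zero : ∀ a ∈ Φ, a ≠ (0 : Module.Dual ℝ A)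
  neg_mem : ∀ a ∈ Φ, -a ∈ Φ
  refl_mem : ∀ a ∈ Φ, ∀ b ∈ Φ, toRootWeightData.refl a b ∈ Φ
  inn_weyl_invariant :
    ∀ w ∈ toRootWeightData.weyl, ∀ x y, inn (w x) (w y) = inn x y
  phi_spans : Submodule.span ℝ (Φ : Set (Module.Dual ℝ A)) = ⊤
  exists_base : ∃ Δ, toRootWeightData.IsBase Δ
  base_cover : ∀ x : A, ∃ Δ, toRootWeightData.IsBase Δ ∧ ∀ a ∈ Δ, 0 ≤ a x
  base_weyl : ∀ w ∈ toRootWeightData.weyl, ∀ Δ, toRootWeightData.IsBase Δ →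
    toRootWeightData.IsBase (Δ.image (w : Module.Dual ℝ A → Module.Dual ℝ A))
  lam0_mem : ∀ Δ, toRootWeightData.IsBase Δ → lam0 Δ ∈ Λ
  lam0_dominates : ∀ Δ, toRootWeightData.IsBase Δ → ∀ l ∈ Λ,
    ∃ n : Module.Dual ℝ A → ℝ, (∀ a ∈ Δ, 0 ≤ n a) ∧ lam0 Δ - l = ∑ a ∈ Δ, n a • a
  weight_weyl_invariant : ∀ w ∈ toRootWeightData.weyl, ∀ l ∈ Λ, w l ∈ Λ
  lam0_equivariant : ∀ w ∈ toRootWeightData.weyl, ∀ Δ, toRootWeightData.IsBase Δ →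
    lam0 (Δ.image (w : Module.Dual ℝ A → Module.Dual ℝ A)) = w (lam0 Δ)
  integrality : ∀ l ∈ Λ, ∀ a ∈ Φ, ∃ k : ℤ, 2 * inn l a / inn a a = (k : ℝ)
  admissible_iff_support : ∀ Δ, toRootWeightData.IsBase Δ → ∀ Y ⊆ Δ,
    (toRootWeightData.Admissible Δ Y ↔ ∃ l ∈ Λ, supp Δ (lam0 Δ - l) = Y)

namespace RootWeightSystem

variable {A : Type*} [NormedAddCommGroup A] [NormedSpace ℝ A] [FiniteDimensional ℝ A]
variable (S : RootWeightSystem A)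

/-- The face `F_Y^Δ` of the apartment `A` associated to a basis `Δ` and an admissible
subset `Y ⊆ Δ`. -/
def Face (Δ Y : Finset (Module.Dual ℝ A)) : Set A :=
  {x | (∀ a ∈ Y, a x = 0) ∧
    ∀ l ∈ S.Λ, ¬ supp Δ (S.lam0 Δ - l) ⊆ Y → 0 < (S.lam0 Δ - l) x}

/-- `F` belongs to the collection `Σ` of faces. -/
def IsFace (F : Set A) : Prop :=
  ∃ Δ Y, S.toRootWeightData.IsBase Δ ∧ S.toRootWeightData.Admissible Δ Y ∧
    F = S.Face Δ Y

/-- The collection `Σ` of all faces. -/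
def Faces : Type _ := {F : Set A // S.IsFace F}

/-- The relation identifying `(F, u)` and `(F, v)` when `u - v ∈ ⟨F⟩`; the quotient is
the disjoint union `Ā = ⊔_{F ∈ Σ} A/⟨F⟩`. -/
def AbarRel (p q : S.Faces × A) : Prop :=
  p.1 = q.1 ∧ p.2 - q.2 ∈ Submodule.span ℝ p.1.val

/-- The compactified apartment `Ā = ⊔_{F ∈ Σ} A_F`, `A_F = A/⟨F⟩`. -/
def Abar : Type _ := Quot S.AbarRel

/-- `r_F(u)`, the image of `u ∈ A` in the stratum `A_F` of `Ā`. -/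
def mkAbar (F : S.Faces) (u : A) : S.Abar := Quot.mk _ (F, u)

/-- The basic set `Γ_F(U) = ⋃_{F' ⊆ cl F} r_{F'}(U + F)` of `Ā`. -/
def Gamma (F : S.Faces) (U : Set A) : Set S.Abar :=
  {p | ∃ F' : S.Faces, F'.val ⊆ closure F.val ∧ ∃ u ∈ U + F.val, p = S.mkAbar F' u}

/-- The topology of `Ā`, generated by the sets `Γ_F(U)` for `F ∈ Σ` and `U ⊆ A`
bounded and open. -/
instance : TopologicalSpace S.Abar :=
  TopologicalSpace.generateFrom
    {V : Set S.Abar | ∃ (F : S.Faces) (U : Set A),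
      IsOpen U ∧ IsBounded U ∧ V = S.Gamma F U}

/-- `f_Ω(a) = inf {t : Ω ⊆ cl_Ā {z ∈ A : a(z) ≥ -t}} ∈ ℝ ∪ {±∞}`, where `A` is embedded
in `Ā` as the stratum of the face `F₀ = {0}`. -/
def fOmega (F₀ : S.Faces) (Ω : Set S.Abar) (a : Module.Dual ℝ A) : EReal :=
  sInf ((fun t : ℝ => (t : EReal)) ''
    {t : ℝ | Ω ⊆ closure (S.mkAbar F₀ '' {z : A | -t ≤ a z})})

end RootWeightSystem

/-! ### Auxiliary lemmas for Statement 14 -/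

set_option linter.unusedSectionVars false

section Aux14

namespace W14

open TopologicalSpace

variable {A : Type*} [NormedAddCommGroup A] [NormedSpace ℝ A] [FiniteDimensional ℝ A]

/-- Uniqueness of coefficients over a linearly independent finite set. -/
lemma coeffs_eq {Δ : Finset (Module.Dual ℝ A)}
    (hΔ : LinearIndependent ℝ (fun a : (Δ : Set (Module.Dual ℝ A)) => (a : Module.Dual ℝ A)))
    {μ : Module.Dual ℝ A} {n : Module.Dual ℝ A → ℝ}
    (h : μ = ∑ b ∈ Δ, n b • b) {b : Module.Dual ℝ A} (hb : b ∈ Δ) :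
    coeffs Δ μ b = n b := by
  have hex : ∃ n : Module.Dual ℝ A → ℝ, μ = ∑ b ∈ Δ, n b • b := ⟨n, h⟩
  have h2 : μ = ∑ b ∈ Δ, hex.choose b • b := hex.choose_spec
  have hz : ∑ b ∈ Δ, (hex.choose b - n b) • b = 0 := by
    have hd : ∑ b ∈ Δ, (hex.choose b - n b) • b
        = (∑ b ∈ Δ, hex.choose b • b) - ∑ b ∈ Δ, n b • b := by
      rw [← Finset.sum_sub_distrib]
      exact Finset.sum_congr rfl fun c _ => sub_smul (hex.choose c) (n c) c
    rw [hd, ← h2, ← h, sub_self]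
  have hz' : ∑ i : (Δ : Set (Module.Dual ℝ A)),
      (hex.choose (i : Module.Dual ℝ A) - n (i : Module.Dual ℝ A)) • (i : Module.Dual ℝ A) = 0 := by
    rw [Finset.sum_set_coe (f := fun b => (hex.choose b - n b) • b), Finset.toFinset_coe]
    exact hz
  have h3 := linearIndependent_iff'.mp hΔ Finset.univ
    (fun i => hex.choose (i : Module.Dual ℝ A) - n (i : Module.Dual ℝ A))
    (by simpa using hz') ⟨b, hb⟩ (Finset.mem_univ _)
  have h4 : hex.choose b - n b = 0 := by simpa using h3
  have hcb : coeffs Δ μ b = hex.choose b := by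
    rw [coeffs, dif_pos hex]
  rw [hcb]
  linarith

lemma coeffs_spec {Δ : Finset (Module.Dual ℝ A)} {μ : Module.Dual ℝ A}
    (h : ∃ n : Module.Dual ℝ A → ℝ, μ = ∑ b ∈ Δ, n b • b) :
    μ = ∑ b ∈ Δ, coeffs Δ μ b • b := by
  rw [coeffs, dif_pos h]
  exact h.choose_spec

lemma supp_zero {Δ : Finset (Module.Dual ℝ A)}
    (hΔ : LinearIndependent ℝ (fun a : (Δ : Set (Module.Dual ℝ A)) => (a : Module.Dual ℝ A))) :
    supp Δ (0 : Module.Dual ℝ A) = ∅ := by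
  rw [supp, Finset.filter_eq_empty_iff]
  intro b hb
  have h0 : (0 : Module.Dual ℝ A) = ∑ b ∈ Δ, (fun _ => (0:ℝ)) b • b := by simp
  have : coeffs Δ (0 : Module.Dual ℝ A) b = (fun _ => (0:ℝ)) b :=
    coeffs_eq hΔ h0 hb
  simpa using this

lemma sum_supp_eq {Δ : Finset (Module.Dual ℝ A)} {μ : Module.Dual ℝ A}
    (h : ∃ n : Module.Dual ℝ A → ℝ, μ = ∑ b ∈ Δ, n b • b) :
    ∑ b ∈ supp Δ μ, coeffs Δ μ b • b = μ := by
  rw [supp]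
  exact (Finset.sum_filter_of_ne (s := Δ) (f := fun b => coeffs Δ μ b • b)
    (p := fun a => coeffs Δ μ a ≠ 0)
    (fun b hb hfne hc => hfne (by show coeffs Δ μ b • b = 0; rw [hc, zero_smul]))).trans (coeffs_spec h).symm

lemma mem_span_of_supp_subset {Δ Y : Finset (Module.Dual ℝ A)} {μ : Module.Dual ℝ A}
    (h : ∃ n : Module.Dual ℝ A → ℝ, μ = ∑ b ∈ Δ, n b • b)
    (hs : supp Δ μ ⊆ Y) : μ ∈ Submodule.span ℝ (Y : Set (Module.Dual ℝ A)) := by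
  rw [← sum_supp_eq h]
  exact Submodule.sum_mem _ fun b hbs =>
    Submodule.smul_mem _ _ (Submodule.subset_span (hs hbs))

end W14

end Aux14
section Aux14B

namespace RootWeightSystem
open W14

variable {A : Type*} [NormedAddCommGroup A] [NormedSpace ℝ A] [FiniteDimensional ℝ A]
variable (S : RootWeightSystem A)

/-- `inn` as a bilinear map. -/
def innL : Module.Dual ℝ A →ₗ[ℝ] Module.Dual ℝ A →ₗ[ℝ] ℝ :=
  LinearMap.mk₂ ℝ S.inn S.inn_add_left
    (fun c x y => by rw [S.inn_smul_left, smul_eq_mul])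
    (fun x y z => by rw [S.inn_symm x, S.inn_add_left, S.inn_symm y x, S.inn_symm z x])
    (fun c x y => by rw [S.inn_symm, S.inn_smul_left, smul_eq_mul, S.inn_symm])

@[simp] lemma innL_apply (x y : Module.Dual ℝ A) : S.innL x y = S.inn x y := rfl

/-- The vector in `A` representing `inn ( · , a)`. -/
def xv (a : Module.Dual ℝ A) : A := (Module.evalEquiv ℝ A).symm (S.innL.flip a)

@[simp] lemma apply_xv (μ a : Module.Dual ℝ A) : μ (S.xv a) = S.inn μ a := by
  rw [xv]
  exact Module.apply_evalEquiv_symm_apply ℝ A μ (S.innL.flip a)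

lemma inn_aa_pos {a : Module.Dual ℝ A} (ha : a ∈ S.Φ) : 0 < S.inn a a :=
  S.inn_pos a (S.root_ne_zero a ha)

lemma refl_mem_weyl {a : Module.Dual ℝ A} (ha : a ∈ S.Φ) :
    S.toRootWeightData.refl a ∈ S.toRootWeightData.weyl :=
  Submonoid.subset_closure ⟨a, ha, rfl⟩

lemma refl_apply (a x : Module.Dual ℝ A) :
    S.toRootWeightData.refl a x = x - (2 * S.inn x a / S.inn a a) • a := rfl

lemma inn_sub_left (x y z : Module.Dual ℝ A) :
    S.inn (x - y) z = S.inn x z - S.inn y z := by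
  have h2 : S.innL (x - y) z = S.innL x z - S.innL y z := by
    rw [map_sub]; rfl
  exact h2

lemma inn_sub_right (x y z : Module.Dual ℝ A) :
    S.inn x (y - z) = S.inn x y - S.inn x z := by
  rw [S.inn_symm, inn_sub_left, S.inn_symm y x, S.inn_symm z x]

lemma inn_smul_left' (c : ℝ) (x y : Module.Dual ℝ A) :
    S.inn (c • x) y = c * S.inn x y := S.inn_smul_left c x y

/-- The reflection of a weight `l` in the root `a`: `l + k • a ∈ Λ` with `k = -⟨l,a∨⟩`. -/
lemma reflect_data {a l : Module.Dual ℝ A} (ha : a ∈ S.Φ) (hl : l ∈ S.Λ) :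
    ∃ kz : ℤ, (kz : ℝ) * S.inn a a = 2 * S.inn l a ∧
      l - (kz : ℝ) • a ∈ S.Λ ∧ S.inn (l - (kz:ℝ) • a) a = - S.inn l a := by
  obtain ⟨kz, hkz⟩ := S.integrality l hl a ha
  have haa := S.inn_aa_pos ha
  refine ⟨kz, ?_, ?_, ?_⟩
  · field_simp at hkz
    linarith [hkz]
  · have : l - (kz : ℝ) • a = S.toRootWeightData.refl a l := by
      rw [refl_apply, hkz]
    rw [this]
    exact S.weight_weyl_invariant _ (S.refl_mem_weyl ha) l hl
  · rw [inn_sub_left, inn_smul_left']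
    have h1 : (kz:ℝ) * S.inn a a = 2 * S.inn l a := by
      field_simp at hkz; linarith [hkz]
    linarith [h1]

end RootWeightSystem

end Aux14B
section Aux14C

namespace RootWeightSystem

open W14

variable {A : Type*} [NormedAddCommGroup A] [NormedSpace ℝ A] [FiniteDimensional ℝ A]
variable (S : RootWeightSystem A)

/-- The closed cone containing the face. -/
def DDset (Δ Y : Finset (Module.Dual ℝ A)) : Set A :=
  {x | (∀ y ∈ Y, y x = 0) ∧
    ∀ l ∈ S.Λ, ¬ supp Δ (S.lam0 Δ - l) ⊆ Y → 0 ≤ (S.lam0 Δ - l) x}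

lemma face_subset_DDset (Δ Y : Finset (Module.Dual ℝ A)) :
    S.Face Δ Y ⊆ S.DDset Δ Y :=
  fun _ hx => ⟨hx.1, fun l hl hb => (hx.2 l hl hb).le⟩

lemma DDset_zero (Δ Y : Finset (Module.Dual ℝ A)) : (0:A) ∈ S.DDset Δ Y :=
  ⟨fun y _ => map_zero y, fun l _ _ => by simp⟩

lemma DDset_add {Δ Y : Finset (Module.Dual ℝ A)} {x y : A}
    (hx : x ∈ S.DDset Δ Y) (hy : y ∈ S.DDset Δ Y) : x + y ∈ S.DDset Δ Y :=
  ⟨fun b hb => by rw [map_add, hx.1 b hb, hy.1 b hb, add_zero],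
   fun l hl hb => by rw [map_add]; exact add_nonneg (hx.2 l hl hb) (hy.2 l hl hb)⟩

lemma DDset_smul {Δ Y : Finset (Module.Dual ℝ A)} {x : A} {c : ℝ}
    (hc : 0 ≤ c) (hx : x ∈ S.DDset Δ Y) : c • x ∈ S.DDset Δ Y :=
  ⟨fun b hb => by rw [map_smul, hx.1 b hb, smul_zero],
   fun l hl hb => by rw [map_smul]; exact smul_nonneg hc (hx.2 l hl hb)⟩

lemma face_add_DD {Δ Y : Finset (Module.Dual ℝ A)} {x d : A}
    (hx : x ∈ S.Face Δ Y) (hd : d ∈ S.DDset Δ Y) : x + d ∈ S.Face Δ Y :=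
  ⟨fun b hb => by rw [map_add, hx.1 b hb, hd.1 b hb, add_zero],
   fun l hl hb => by
     rw [map_add]; exact add_pos_of_pos_of_nonneg (hx.2 l hl hb) (hd.2 l hl hb)⟩

lemma face_smul {Δ Y : Finset (Module.Dual ℝ A)} {x : A} {c : ℝ}
    (hc : 0 < c) (hx : x ∈ S.Face Δ Y) : c • x ∈ S.Face Δ Y :=
  ⟨fun b hb => by rw [map_smul, hx.1 b hb, smul_zero],
   fun l hl hb => by rw [map_smul]; exact smul_pos hc (hx.2 l hl hb)⟩

lemma face_add_face {Δ Y : Finset (Module.Dual ℝ A)} {x y : A}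
    (hx : x ∈ S.Face Δ Y) (hy : y ∈ S.Face Δ Y) : x + y ∈ S.Face Δ Y :=
  S.face_add_DD hx (S.face_subset_DDset Δ Y hy)

lemma closure_face_subset (Δ Y : Finset (Module.Dual ℝ A)) :
    closure (S.Face Δ Y) ⊆ S.DDset Δ Y := by
  intro x hx
  constructor
  · intro y hy
    have hc : Continuous y := y.continuous_of_finiteDimensional
    have hsub : S.Face Δ Y ⊆ (y ⁻¹' {0} : Set A) := fun z hz => hz.1 y hy
    have hcl : IsClosed (y ⁻¹' {0} : Set A) := isClosed_singleton.preimage hc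
    simpa using (closure_minimal hsub hcl) hx
  · intro l hl hb
    have hc : Continuous (S.lam0 Δ - l) :=
      (S.lam0 Δ - l).continuous_of_finiteDimensional
    have hsub : S.Face Δ Y ⊆ ((S.lam0 Δ - l) ⁻¹' Set.Ici 0) :=
      fun z hz => (hz.2 l hl hb).le
    simpa using (closure_minimal hsub (isClosed_Ici.preimage hc)) hx

lemma zero_mem_closure_face {Δ Y : Finset (Module.Dual ℝ A)}
    (h : (S.Face Δ Y).Nonempty) : (0:A) ∈ closure (S.Face Δ Y) := by
  obtain ⟨f, hf⟩ := h
  have htend : Filter.Tendsto (fun n : ℕ => (1/((n:ℝ)+1)) • f) Filter.atTop (nhds (0:A)) := by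
    have := (tendsto_one_div_add_atTop_nhds_zero_nat (𝕜 := ℝ)).smul_const f
    simpa using this
  exact mem_closure_of_tendsto htend
    (Filter.Eventually.of_forall fun n => S.face_smul (by positivity) hf)

lemma span_vanish {Y : Finset (Module.Dual ℝ A)} {μ : Module.Dual ℝ A}
    (hμ : μ ∈ Submodule.span ℝ (Y : Set (Module.Dual ℝ A))) {x : A}
    (hx : ∀ y ∈ Y, y x = 0) : μ x = 0 := by
  have hle : Submodule.span ℝ (Y : Set (Module.Dual ℝ A)) ≤
      LinearMap.ker (Module.Dual.eval ℝ A x) := by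
    rw [Submodule.span_le]
    intro y hy
    rw [SetLike.mem_coe, LinearMap.mem_ker]
    exact hx y hy
  exact hle hμ

lemma face_nonempty {Δ Y : Finset (Module.Dual ℝ A)}
    (hb : S.toRootWeightData.IsBase Δ) (hY : Y ⊆ Δ) :
    (S.Face Δ Y).Nonempty := by
  obtain ⟨hΔΦ, hli, hrep⟩ := hb
  have hspan : Submodule.span ℝ (Δ : Set (Module.Dual ℝ A)) = ⊤ := by
    rw [← top_le_iff, ← S.phi_spans, Submodule.span_le]
    intro aa haa
    rcases hrep aa haa with ⟨n, _, h⟩ | ⟨n, _, h⟩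
    · rw [h]
      exact Submodule.sum_mem _ fun b hb' =>
        Submodule.smul_mem _ _ (Submodule.subset_span hb')
    · rw [h]
      exact Submodule.neg_mem _ (Submodule.sum_mem _ fun b hb' =>
        Submodule.smul_mem _ _ (Submodule.subset_span hb'))
  set Bas : Module.Basis (Δ : Set (Module.Dual ℝ A)) ℝ (Module.Dual ℝ A) :=
    Module.Basis.mk hli (by rw [Subtype.range_coe]; exact hspan.ge) with hBas
  set φ : Module.Dual ℝ (Module.Dual ℝ A) :=
    ∑ i : (Δ : Set (Module.Dual ℝ A)),
      (if (i : Module.Dual ℝ A) ∈ Y then (0:ℝ) else 1) • Bas.coord i with hφ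
  set x : A := (Module.evalEquiv ℝ A).symm φ with hxdef
  have hx : ∀ μ : Module.Dual ℝ A, μ x = φ μ :=
    fun μ => Module.apply_evalEquiv_symm_apply ℝ A μ φ
  have hxb : ∀ b, ∀ hbΔ : b ∈ Δ, b x = if b ∈ Y then (0:ℝ) else 1 := by
    intro b hbΔ
    have hb' : b = Bas ⟨b, hbΔ⟩ := by rw [hBas, Module.Basis.mk_apply]
    have hrepr : Bas.repr b = Finsupp.single (⟨b, hbΔ⟩ : (Δ : Set (Module.Dual ℝ A))) 1 := by
      have := Bas.repr_self (⟨b, hbΔ⟩ : (Δ : Set (Module.Dual ℝ A)))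
      rw [← hb'] at this
      exact this
    rw [hx]
    have h1 : φ b = ∑ i : (Δ : Set (Module.Dual ℝ A)),
        (if (i : Module.Dual ℝ A) ∈ Y then (0:ℝ) else 1) * (Bas.repr b i) := by
      rw [hφ, LinearMap.sum_apply]
      exact Finset.sum_congr rfl fun i _ => by
        rw [LinearMap.smul_apply, Module.Basis.coord_apply, smul_eq_mul]
    rw [h1, hrepr]
    rw [Finset.sum_eq_single (⟨b, hbΔ⟩ : (Δ : Set (Module.Dual ℝ A)))]
    · simp
    · intro i _ hne
      rw [Finsupp.single_eq_of_ne hne, mul_zero]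
    · intro h; exact absurd (Finset.mem_univ _) h
  refine ⟨x, ?_, ?_⟩
  · intro y hy
    rw [hxb y (hY hy), if_pos hy]
  · intro l hl hbad
    obtain ⟨n, hn0, hnrep⟩ := S.lam0_dominates Δ ⟨hΔΦ, hli, hrep⟩ l hl
    have heval : (S.lam0 Δ - l) x = ∑ b ∈ Δ, n b * (b x) := by
      rw [hnrep]
      simp
    rw [heval]
    obtain ⟨b₀, hb₀s, hb₀Y⟩ := Finset.not_subset.mp hbad
    have hb₀Δ : b₀ ∈ Δ := (Finset.mem_filter.mp hb₀s).1
    have hco : coeffs Δ (S.lam0 Δ - l) b₀ = n b₀ := W14.coeffs_eq hli hnrep hb₀Δ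
    have hnb₀ : n b₀ ≠ 0 := by rw [← hco]; exact (Finset.mem_filter.mp hb₀s).2
    refine Finset.sum_pos' ?_ ⟨b₀, hb₀Δ, ?_⟩
    · intro b hbΔ
      rw [hxb b hbΔ]
      split
      · simp
      · simpa using hn0 b hbΔ
    · rw [hxb b₀ hb₀Δ, if_neg hb₀Y, mul_one]
      exact lt_of_le_of_ne (hn0 b₀ hb₀Δ) (Ne.symm hnb₀)

end RootWeightSystem

end Aux14C
section Aux14D

namespace W14

/-- Chains of given length for a relation. -/
inductive ChainN {α : Type*} (r : α → α → Prop) : ℕ → α → α → Prop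
  | refl (x : α) : ChainN r 0 x x
  | head {x y z : α} {n : ℕ} : r x y → ChainN r n y z → ChainN r (n+1) x z

lemma ChainN.tail {α : Type*} {r : α → α → Prop} {n : ℕ} {x y z : α}
    (h : ChainN r n x y) (hr : r y z) : ChainN r (n+1) x z := by
  induction h with
  | refl w => exact ChainN.head hr (ChainN.refl z)
  | head h1 h2 ih => exact ChainN.head h1 (ih hr)

lemma reflTransGen_iff_chainN {α : Type*} {r : α → α → Prop} {x y : α} :
    Relation.ReflTransGen r x y ↔ ∃ n, ChainN r n x y := by
  constructor
  · intro h
    induction h with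
    | refl => exact ⟨0, ChainN.refl x⟩
    | tail h1 h2 ih => obtain ⟨n, hn⟩ := ih; exact ⟨n+1, hn.tail h2⟩
  · rintro ⟨n, hn⟩
    induction hn with
    | refl w => exact Relation.ReflTransGen.refl
    | head h1 h2 ih => exact Relation.ReflTransGen.head h1 ih

lemma chainN_succ {α : Type*} {r : α → α → Prop} {n : ℕ} {x z : α}
    (h : ChainN r (n+1) x z) : ∃ y, ChainN r n x y ∧ r y z := by
  induction n generalizing x z with
  | zero =>
    cases h with
    | head h1 h2 => cases h2 with | refl w => exact ⟨x, ChainN.refl x, h1⟩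
  | succ m ih =>
    cases h with
    | head h1 h2 =>
      obtain ⟨w, hw1, hw2⟩ := ih h2
      exact ⟨w, ChainN.head h1 hw1, hw2⟩

lemma chainN_zero {α : Type*} {r : α → α → Prop} {x z : α}
    (h : ChainN r 0 x z) : x = z := by cases h; rfl

/-- In a finite connected graph (with distinguished vertex `ρ`), there is a vertex
`y ≠ ρ` whose removal keeps the graph connected. -/
lemma graph_remove {D : Type*} (inn : D → D → ℝ) (hsymm : ∀ x y, inn x y = inn y x)
    (Y' : Finset D) (ρ : D) (hconn : GraphConnected inn (↑Y' ∪ {ρ}))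
    (hne : Y'.Nonempty) :
    ∃ y ∈ Y', GraphConnected inn (↑(Y'.erase y) ∪ {ρ}) := by
  classical
  set M : Set D := ↑Y' ∪ {ρ} with hM
  set e : D → D → Prop := fun x y => x ∈ M ∧ y ∈ M ∧ inn x y ≠ 0 with he
  have hρM : ρ ∈ M := Set.mem_union_right _ rfl
  have hex : ∀ z ∈ M, ∃ n, ChainN e n ρ z := by
    intro z hz
    exact reflTransGen_iff_chainN.mp (hconn ρ hρM z hz)
  set d : D → ℕ := fun z => if h : ∃ n, ChainN e n ρ z then Nat.find h else 0 with hd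
  have hdspec : ∀ z ∈ M, ChainN e (d z) ρ z := by
    intro z hz
    rw [hd]
    simp only [dif_pos (hex z hz)]
    exact Nat.find_spec (hex z hz)
  have hdmin : ∀ z, ∀ n, ChainN e n ρ z → d z ≤ n := by
    intro z n hn
    have hzex : ∃ m, ChainN e m ρ z := ⟨n, hn⟩
    rw [hd]
    simp only [dif_pos hzex]
    exact Nat.find_le hn
  have hdzero : ∀ z, d z = 0 → z ∈ M → z = ρ := by
    intro z h0 hz
    have := hdspec z hz
    rw [h0] at this
    exact (chainN_zero this).symm
  have hdρ : d ρ = 0 := Nat.le_zero.mp (hdmin ρ 0 (ChainN.refl ρ))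
  obtain ⟨y, hyY, hymax⟩ := Finset.exists_max_image Y' d hne
  by_cases hyρ : y = ρ
  · -- then all of Y' equals ρ, and the erased graph is just {ρ}
    refine ⟨y, hyY, ?_⟩
    intro m hm n hn
    have hmem : ∀ z, z ∈ (↑(Y'.erase y) : Set D) ∪ {ρ} → z = ρ := by
      intro z hz
      rcases hz with hz | hz
      · have hzY : z ∈ Y'.erase y := hz
        have hz1 := Finset.mem_of_mem_erase hzY
        have hz2 := Finset.ne_of_mem_erase hzY
        have : d z ≤ d y := hymax z hz1
        rw [hyρ, hdρ] at this
        have hz0 : d z = 0 := Nat.le_zero.mp this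
        have := hdzero z hz0 (Set.mem_union_left _ hz1)
        exact absurd (this.trans hyρ.symm) hz2
      · exact hz
    rw [hmem m hm, hmem n hn]
  · -- y ≠ ρ : removal keeps connectivity
    refine ⟨y, hyY, ?_⟩
    set M' : Set D := ↑(Y'.erase y) ∪ {ρ} with hM'
    have hM'sub : M' ⊆ M := by
      intro z hz
      rcases hz with hz | hz
      · exact Set.mem_union_left _ (Finset.mem_of_mem_erase hz)
      · exact Set.mem_union_right _ hz
    have hM'ne : ∀ z ∈ M', z ≠ y := by
      intro z hz
      rcases hz with hz | hz
      · exact Finset.ne_of_mem_erase hz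
      · rintro rfl; exact hyρ hz
    have hMM' : ∀ z ∈ M, z ≠ y → z ∈ M' := by
      intro z hz hne'
      rcases hz with hz | hz
      · exact Set.mem_union_left _ (Finset.mem_erase.mpr ⟨hne', hz⟩)
      · exact Set.mem_union_right _ hz
    set e' : D → D → Prop := fun x y => x ∈ M' ∧ y ∈ M' ∧ inn x y ≠ 0 with he'
    -- main claim by strong induction on n
    have main : ∀ n, ∀ z ∈ M, z ≠ y → d z ≤ n → Relation.ReflTransGen e' ρ z := by
      intro n
      induction n with
      | zero =>
        intro z hz hzy h0
        have := hdzero z (Nat.le_zero.mp h0) hz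
        rw [this]
      | succ m ih =>
        intro z hz hzy hle
        by_cases hc : d z ≤ m
        · exact ih z hz hzy hc
        · have hdz : d z = m + 1 := le_antisymm hle (Nat.succ_le_of_lt (not_le.mp hc))
          have hch : ChainN e (m+1) ρ z := by
            have := hdspec z hz
            rwa [hdz] at this
          obtain ⟨b, hb1, hb2⟩ := chainN_succ hch
          have hbM : b ∈ M := hb2.1
          have hdb : d b ≤ m := hdmin b m hb1
          have hby : b ≠ y := by
            intro hbeq
            have h1 : d z ≤ d y := by
              rcases hz with hz' | hz'
              · exact hymax z hz'
              · have : z = ρ := hz'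
                rw [this, hdρ]; exact Nat.zero_le _
            rw [← hbeq] at h1
            omega
          have hrtg := ih b hbM hby hdb
          exact hrtg.tail ⟨hMM' b hbM hby, hMM' z hz hzy, hb2.2.2⟩
    have hsym' : Symmetric e' := by
      intro p q hpq
      exact ⟨hpq.2.1, hpq.1, by rw [hsymm]; exact hpq.2.2⟩
    intro m hm n hn
    have h1 : Relation.ReflTransGen e' ρ m :=
      main (d m) m (hM'sub hm) (hM'ne m hm) le_rfl
    have h2 : Relation.ReflTransGen e' ρ n :=
      main (d n) n (hM'sub hn) (hM'ne n hn) le_rfl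
    haveI : Std.Symm e' := ⟨fun _ _ h => hsym' h⟩
    exact (Std.Symm.symm _ _ h1).trans h2

end W14

end Aux14D
section Aux14E

namespace RootWeightSystem

open W14

variable {A : Type*} [NormedAddCommGroup A] [NormedSpace ℝ A] [FiniteDimensional ℝ A]
variable (S : RootWeightSystem A)

lemma inn_flip_eval {a μ : Module.Dual ℝ A} : S.innL.flip a μ = S.inn μ a := rfl

lemma inn_expand {Δ : Finset (Module.Dual ℝ A)} {μ : Module.Dual ℝ A}
    {n : Module.Dual ℝ A → ℝ} (h : μ = ∑ b ∈ Δ, n b • b) (a : Module.Dual ℝ A) :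
    S.inn μ a = ∑ b ∈ Δ, n b * S.inn b a := by
  have h1 := congrArg (fun ν => S.innL.flip a ν) h
  simp only [map_sum, map_smul, smul_eq_mul] at h1
  exact h1

lemma step3 {Δ Y : Finset (Module.Dual ℝ A)} {a : Module.Dual ℝ A}
    (hb : S.toRootWeightData.IsBase Δ) (hadm : S.toRootWeightData.Admissible Δ Y)
    (H3' : ∀ l ∈ S.Λ, supp Δ (S.lam0 Δ - l) ⊆ Y → S.inn l a = 0) :
    ∀ y ∈ Y, S.inn y a = 0 := by
  classical
  have hlamΛ := S.lam0_mem Δ hb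
  have hsupp0 : supp Δ (S.lam0 Δ - S.lam0 Δ) ⊆ Y := by
    rw [sub_self, W14.supp_zero hb.2.1]
    exact Finset.empty_subset _
  have hlam0 : S.inn (S.lam0 Δ) a = 0 := H3' _ hlamΛ hsupp0
  have aux : ∀ n : ℕ, ∀ Y' : Finset (Module.Dual ℝ A), Y'.card ≤ n → Y' ⊆ Y →
      S.toRootWeightData.Admissible Δ Y' → ∀ y ∈ Y', S.inn y a = 0 := by
    intro n
    induction n with
    | zero =>
      intro Y' hcard _ _ y hy
      rw [Finset.card_eq_zero.mp (Nat.le_zero.mp hcard)] at hy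
      exact absurd hy (Finset.notMem_empty y)
    | succ n ih =>
      intro Y' hcard hYY hadm' y hy
      have hne : Y'.Nonempty := ⟨y, hy⟩
      obtain ⟨y', hy'Y, hconn'⟩ :=
        W14.graph_remove S.inn S.inn_symm Y' (S.lam0 Δ) hadm'.2 hne
      have hadm'' : S.toRootWeightData.Admissible Δ (Y'.erase y') :=
        ⟨(Finset.erase_subset _ _).trans hadm'.1, hconn'⟩
      have hcard' : (Y'.erase y').card ≤ n := by
        rw [Finset.card_erase_of_mem hy'Y]
        omega
      have iherase : ∀ z ∈ Y'.erase y', S.inn z a = 0 :=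
        ih (Y'.erase y') hcard' ((Finset.erase_subset _ _).trans hYY) hadm''
      -- the weight realizing the support Y'
      obtain ⟨l, hl, hsupp⟩ :=
        (S.admissible_iff_support Δ hb Y' hadm'.1).mp hadm'
      have hlY : supp Δ (S.lam0 Δ - l) ⊆ Y := by rw [hsupp]; exact hYY
      have hinnl : S.inn l a = 0 := H3' l hl hlY
      have hinnsub : S.inn (S.lam0 Δ - l) a = 0 := by
        rw [S.inn_sub_left, hlam0, hinnl, sub_zero]
      obtain ⟨nn, hn0, hnrep⟩ := S.lam0_dominates Δ hb l hl
      have hsum : S.inn (S.lam0 Δ - l) a = ∑ b ∈ Δ, nn b * S.inn b a :=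
        S.inn_expand hnrep a
      have hy'Δ : y' ∈ Δ := hadm'.1 hy'Y
      have hsingle : ∑ b ∈ Δ, nn b * S.inn b a = nn y' * S.inn y' a := by
        refine Finset.sum_eq_single y' ?_ ?_
        · intro b hbΔ hby'
          by_cases hbY' : b ∈ Y'
          · rw [iherase b (Finset.mem_erase.mpr ⟨hby', hbY'⟩), mul_zero]
          · have hco : coeffs Δ (S.lam0 Δ - l) b = nn b :=
              W14.coeffs_eq hb.2.1 hnrep hbΔ
            have hnb : nn b = 0 := by
              by_contra hne'
              exact hbY' (hsupp ▸ Finset.mem_filter.mpr ⟨hbΔ, hco ▸ hne'⟩)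
            rw [hnb, zero_mul]
        · intro habs
          exact absurd hy'Δ habs
      have hny' : nn y' ≠ 0 := by
        have hmem : y' ∈ supp Δ (S.lam0 Δ - l) := hsupp ▸ hy'Y
        have hco : coeffs Δ (S.lam0 Δ - l) y' = nn y' :=
          W14.coeffs_eq hb.2.1 hnrep hy'Δ
        have := (Finset.mem_filter.mp hmem).2
        rwa [hco] at this
      have hy'0 : S.inn y' a = 0 := by
        have h0 : nn y' * S.inn y' a = 0 := by rw [← hsingle, ← hsum, hinnsub]
        rcases mul_eq_zero.mp h0 with h | h
        · exact absurd h hny'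
        · exact h
      by_cases hyy' : y = y'
      · rw [hyy']; exact hy'0
      · exact iherase y (Finset.mem_erase.mpr ⟨hyy', hy⟩)
  intro y hy
  exact aux Y.card Y le_rfl (fun _ h => h) hadm y hy

end RootWeightSystem

end Aux14E
section Aux14F

namespace RootWeightSystem

open W14

variable {A : Type*} [NormedAddCommGroup A] [NormedSpace ℝ A] [FiniteDimensional ℝ A]
variable (S : RootWeightSystem A)

lemma heart {Δ Y : Finset (Module.Dual ℝ A)} {a : Module.Dual ℝ A}
    (hb : S.toRootWeightData.IsBase Δ) (hadm : S.toRootWeightData.Admissible Δ Y)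
    (ha : a ∈ S.Φ) (hnsp : a ∉ Submodule.span ℝ (Y : Set (Module.Dual ℝ A)))
    (hneg : ∀ x ∈ S.Face Δ Y, a x ≤ 0) :
    ∃ l ∈ S.Λ, supp Δ (S.lam0 Δ - l) ⊆ Y ∧ ∃ k : ℕ, 0 < k ∧ l + (k:ℝ) • a ∈ S.Λ := by
  classical
  by_contra hcon
  push_neg at hcon
  have haa := S.inn_aa_pos ha
  obtain ⟨x₀, hx₀⟩ := S.face_nonempty hb hadm.1
  have hax₀le : a x₀ ≤ 0 := hneg x₀ hx₀
  -- vanishing of `lam0 - l` on the face, for good weights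
  have hvan : ∀ l ∈ S.Λ, supp Δ (S.lam0 Δ - l) ⊆ Y → (S.lam0 Δ - l) x₀ = 0 := by
    intro l hl hs
    obtain ⟨nn, hn0, hnrep⟩ := S.lam0_dominates Δ hb l hl
    exact span_vanish (W14.mem_span_of_supp_subset ⟨nn, hnrep⟩ hs) hx₀.1
  -- H3 : good weights pair nonnegatively with a
  have H3 : ∀ l ∈ S.Λ, supp Δ (S.lam0 Δ - l) ⊆ Y → 0 ≤ S.inn l a := by
    intro l hl hs
    by_contra hlt
    push_neg at hlt
    obtain ⟨kz, hkz1, hkz2, hkz3⟩ := S.reflect_data ha hl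
    have hkzR : (kz:ℝ) < 0 := by nlinarith
    have hkzneg : kz < 0 := by exact_mod_cast hkzR
    set k : ℕ := (-kz).toNat with hk
    have hkpos : 0 < k := by omega
    have hcast : ((k:ℝ)) = -(kz:ℝ) := by
      have h1 : ((-kz).toNat : ℤ) = -kz := Int.toNat_of_nonneg (by omega)
      rw [hk]
      rw [show (((-kz).toNat : ℕ):ℝ) = (((-kz).toNat : ℤ):ℝ) from by norm_cast, h1]
      push_cast
      ring
    have heq : l + (k:ℝ) • a = l - (kz:ℝ) • a := by
      rw [hcast]
      module
    exact hcon l hl hs k hkpos (heq ▸ hkz2)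
  have hlamΛ := S.lam0_mem Δ hb
  have hsupp0 : supp Δ (S.lam0 Δ - S.lam0 Δ) ⊆ Y := by
    rw [sub_self, W14.supp_zero hb.2.1]
    exact Finset.empty_subset _
  -- H3' : good weights pair to zero with a
  have H3' : ∀ l ∈ S.Λ, supp Δ (S.lam0 Δ - l) ⊆ Y → S.inn l a = 0 := by
    intro l hl hs
    rcases lt_or_eq_of_le (H3 l hl hs) with hgt | heqz
    · exfalso
      obtain ⟨kz, hkz1, hkz2, hkz3⟩ := S.reflect_data ha hl
      have hkzR : 0 < (kz:ℝ) := by nlinarith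
      have hl'bad : ¬ supp Δ (S.lam0 Δ - (l - (kz:ℝ) • a)) ⊆ Y := by
        intro hsub
        have h0 := H3 _ hkz2 hsub
        rw [hkz3] at h0
        linarith
      have hface := hx₀.2 _ hkz2 hl'bad
      have hdec : S.lam0 Δ - (l - (kz:ℝ) • a) = (S.lam0 Δ - l) + (kz:ℝ) • a := by abel
      rw [hdec, LinearMap.add_apply, hvan l hl hs, LinearMap.smul_apply, smul_eq_mul,
        zero_add] at hface
      have hax₀ : 0 < a x₀ := by nlinarith
      linarith
    · exact heqz.symm
  have hlam0 : S.inn (S.lam0 Δ) a = 0 := H3' _ hlamΛ hsupp0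
  -- H6 : Y is orthogonal to a
  have H6 : ∀ y ∈ Y, S.inn y a = 0 := S.step3 hb hadm H3'
  -- final construction
  set xa := S.xv a with hxa
  have hxaev : ∀ μ : Module.Dual ℝ A, μ xa = S.inn μ a := fun μ => S.apply_xv μ a
  set B := S.Λ.filter
    (fun l => ¬ supp Δ (S.lam0 Δ - l) ⊆ Y ∧ (S.lam0 Δ - l) xa < 0) with hB
  set T : Finset ℝ :=
    insert 0 (B.image (fun l => (-((S.lam0 Δ - l) xa)) / ((S.lam0 Δ - l) x₀))) with hT
  have hTne : T.Nonempty := ⟨0, Finset.mem_insert_self _ _⟩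
  set m := T.max' hTne with hm
  have hm0 : 0 ≤ m := Finset.le_max' T 0 (Finset.mem_insert_self _ _)
  -- key bound
  have hkeyB : ∀ l ∈ B, a x₀ < 0 →
      (-((S.lam0 Δ - l) xa)) / ((S.lam0 Δ - l) x₀) < S.inn a a / (-(a x₀)) := by
    intro l hlB hax₀
    obtain ⟨hl, hbadl, hwl⟩ : l ∈ S.Λ ∧ ¬ supp Δ (S.lam0 Δ - l) ⊆ Y ∧
        (S.lam0 Δ - l) xa < 0 := by
      have := Finset.mem_filter.mp hlB
      exact ⟨this.1, this.2.1, this.2.2⟩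
    have hd : 0 < (S.lam0 Δ - l) x₀ := hx₀.2 l hl hbadl
    have hw : (S.lam0 Δ - l) xa = - S.inn l a := by
      rw [hxaev, S.inn_sub_left, hlam0, zero_sub]
    have hinnla : 0 < S.inn l a := by
      rw [hw] at hwl
      linarith
    obtain ⟨kz, hkz1, hkz2, hkz3⟩ := S.reflect_data ha hl
    have hkzR : 0 < (kz:ℝ) := by nlinarith
    have hl'bad : ¬ supp Δ (S.lam0 Δ - (l - (kz:ℝ) • a)) ⊆ Y := by
      intro hsub
      have h0 := H3' _ hkz2 hsub
      rw [hkz3] at h0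
      linarith
    have hd' : 0 < (S.lam0 Δ - (l - (kz:ℝ) • a)) x₀ := hx₀.2 _ hkz2 hl'bad
    have hdec : S.lam0 Δ - (l - (kz:ℝ) • a) = (S.lam0 Δ - l) + (kz:ℝ) • a := by abel
    rw [hdec, LinearMap.add_apply, LinearMap.smul_apply, smul_eq_mul] at hd'
    -- hd' : 0 < (lam - l) x₀ + kz * a x₀
    rw [div_lt_div_iff₀ hd (by linarith : (0:ℝ) < -(a x₀))]
    rw [hw]
    have hgoal : S.inn l a * (-(a x₀)) < S.inn a a * ((S.lam0 Δ - l) x₀) := by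
      nlinarith
    nlinarith
  -- choice of ε
  have hεex : ∃ ε : ℝ, 0 < ε ∧ (∀ l ∈ B,
      (-((S.lam0 Δ - l) xa)) / ((S.lam0 Δ - l) x₀) < ε) ∧
      (a x₀ < 0 → ε < S.inn a a / (-(a x₀))) := by
    by_cases hc : a x₀ < 0
    · set R := S.inn a a / (-(a x₀)) with hR
      have hR0 : 0 < R := div_pos haa (by linarith)
      have hmR : m < R := by
        have hmem := T.max'_mem hTne
        rw [← hm] at hmem
        rcases Finset.mem_insert.mp hmem with h0 | himg
        · rw [h0]; exact hR0
        · obtain ⟨l, hlB, hlm⟩ := Finset.mem_image.mp himg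
          rw [← hlm]
          exact hkeyB l hlB hc
      refine ⟨(m + R)/2, by linarith, ?_, by intro _; linarith⟩
      intro l hlB
      have : (-((S.lam0 Δ - l) xa)) / ((S.lam0 Δ - l) x₀) ≤ m :=
        Finset.le_max' T _ (Finset.mem_insert_of_mem
          (Finset.mem_image.mpr ⟨l, hlB, rfl⟩))
      linarith
    · refine ⟨m + 1, by linarith, ?_, fun h => absurd h hc⟩
      intro l hlB
      have : (-((S.lam0 Δ - l) xa)) / ((S.lam0 Δ - l) x₀) ≤ m :=
        Finset.le_max' T _ (Finset.mem_insert_of_mem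
          (Finset.mem_image.mpr ⟨l, hlB, rfl⟩))
      linarith
  obtain ⟨ε, hε0, hεB, hεR⟩ := hεex
  set x := ε • x₀ + xa with hxdef
  have hev : ∀ μ : Module.Dual ℝ A, μ x = ε * μ x₀ + μ xa := by
    intro μ
    rw [hxdef, map_add, map_smul, smul_eq_mul]
  have hxF : x ∈ S.Face Δ Y := by
    constructor
    · intro y hy
      rw [hev, hx₀.1 y hy, hxaev, H6 y hy, mul_zero, add_zero]
    · intro l hl hbadl
      have hd : 0 < (S.lam0 Δ - l) x₀ := hx₀.2 l hl hbadl
      rw [hev]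
      by_cases hwl : (S.lam0 Δ - l) xa < 0
      · have hlB : l ∈ B := Finset.mem_filter.mpr ⟨hl, hbadl, hwl⟩
        have hrat := hεB l hlB
        rw [div_lt_iff₀ hd] at hrat
        linarith
      · push_neg at hwl
        have := mul_pos hε0 hd
        linarith
  have hax : 0 < a x := by
    rw [hev, hxaev]
    by_cases hc : a x₀ < 0
    · have hR := hεR hc
      rw [lt_div_iff₀ (by linarith : (0:ℝ) < -(a x₀))] at hR
      nlinarith
    · have h0 : a x₀ = 0 := le_antisymm hax₀le (not_lt.mp hc)
      rw [h0, mul_zero, zero_add]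
      exact haa
  exact absurd (hneg x hxF) (by linarith)

end RootWeightSystem

end Aux14F
section Aux14G

namespace RootWeightSystem

open W14

variable {A : Type*} [NormedAddCommGroup A] [NormedSpace ℝ A] [FiniteDimensional ℝ A]
variable (S : RootWeightSystem A)

lemma abarRel_eqvGen {p q : S.Faces × A} (h : Relation.EqvGen S.AbarRel p q) :
    p.1 = q.1 ∧ p.2 - q.2 ∈ Submodule.span ℝ p.1.val := by
  induction h with
  | rel x y hxy => exact ⟨hxy.1, hxy.2⟩
  | refl x => exact ⟨rfl, by simp⟩
  | symm x y hxy ih =>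
    refine ⟨ih.1.symm, ?_⟩
    rw [← ih.1]
    have h2 : y.2 - x.2 = -(x.2 - y.2) := by abel
    rw [h2]
    exact Submodule.neg_mem _ ih.2
  | trans x y z hxy hyz ih1 ih2 =>
    refine ⟨ih1.1.trans ih2.1, ?_⟩
    have h2 : x.2 - z.2 = (x.2 - y.2) + (y.2 - z.2) := by abel
    rw [h2]
    exact Submodule.add_mem _ ih1.2 (by rw [ih1.1]; exact ih2.2)

lemma mkAbar_eq_iff {F G : S.Faces} {u v : A} :
    S.mkAbar F u = S.mkAbar G v ↔ F = G ∧ u - v ∈ Submodule.span ℝ F.val := by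
  constructor
  · intro h
    have h' : Quot.mk S.AbarRel (F, u) = Quot.mk S.AbarRel (G, v) := h
    exact S.abarRel_eqvGen (Quot.eq.mp h')
  · rintro ⟨h1, h2⟩
    exact Quot.sound ⟨h1, h2⟩

lemma mem_gamma_iff {G : S.Faces} {w : A} {F : S.Faces} {U : Set A} :
    S.mkAbar G w ∈ S.Gamma F U ↔
      (G.val ⊆ closure F.val ∧ ∃ u ∈ U + F.val, w - u ∈ Submodule.span ℝ G.val) := by
  constructor
  · rintro ⟨F', hF', u, hu, heq⟩
    obtain ⟨h1, h2⟩ := (S.mkAbar_eq_iff).mp heq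
    subst h1
    exact ⟨hF', u, hu, h2⟩
  · rintro ⟨h1, u, hu, h2⟩
    exact ⟨G, h1, u, hu, (S.mkAbar_eq_iff).mpr ⟨rfl, h2⟩⟩

lemma abar_basis : TopologicalSpace.IsTopologicalBasis
    ((fun f : Set (Set S.Abar) => ⋂₀ f) '' {f : Set (Set S.Abar) | f.Finite ∧
      f ⊆ {V | ∃ (F : S.Faces) (U : Set A), IsOpen U ∧ IsBounded U ∧ V = S.Gamma F U}}) :=
  TopologicalSpace.isTopologicalBasis_of_subbasis rfl

lemma gamma_isOpen {F : S.Faces} {U : Set A} (hU : IsOpen U) (hUb : IsBounded U) :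
    IsOpen (S.Gamma F U) :=
  TopologicalSpace.isOpen_generateFrom_of_mem ⟨F, U, hU, hUb, rfl⟩

lemma span_face_decomp {Δ Y : Finset (Module.Dual ℝ A)} {x : A}
    (hx : x ∈ Submodule.span ℝ (S.Face Δ Y)) :
    ∃ g g', (g ∈ S.Face Δ Y ∨ g = 0) ∧ (g' ∈ S.Face Δ Y ∨ g' = 0) ∧ x = g - g' := by
  induction hx using Submodule.span_induction with
  | mem y hy => exact ⟨y, 0, Or.inl hy, Or.inr rfl, (sub_zero y).symm⟩
  | zero => exact ⟨0, 0, Or.inr rfl, Or.inr rfl, by simp⟩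
  | add p q hp hq ihp ihq =>
    obtain ⟨g1, g1', h1, h1', he1⟩ := ihp
    obtain ⟨g2, g2', h2, h2', he2⟩ := ihq
    refine ⟨g1 + g2, g1' + g2', ?_, ?_, by rw [he1, he2]; abel⟩
    · rcases h1 with h1 | h1
      · rcases h2 with h2 | h2
        · exact Or.inl (S.face_add_face h1 h2)
        · rw [h2, add_zero]; exact Or.inl h1
      · rw [h1, zero_add]; exact h2
    · rcases h1' with h1' | h1'
      · rcases h2' with h2' | h2'
        · exact Or.inl (S.face_add_face h1' h2')
        · rw [h2', add_zero]; exact Or.inl h1'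
      · rw [h1', zero_add]; exact h2'
  | smul r p hp ih =>
    obtain ⟨g, g', hg, hg', he⟩ := ih
    rcases lt_trichotomy r 0 with hr | hr | hr
    · refine ⟨(-r) • g', (-r) • g, ?_, ?_, by rw [he]; module⟩
      · rcases hg' with h | h
        · exact Or.inl (S.face_smul (by linarith) h)
        · rw [h, smul_zero]; exact Or.inr rfl
      · rcases hg with h | h
        · exact Or.inl (S.face_smul (by linarith) h)
        · rw [h, smul_zero]; exact Or.inr rfl
    · exact ⟨0, 0, Or.inr rfl, Or.inr rfl, by rw [hr, he, zero_smul]; simp⟩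
    · refine ⟨r • g, r • g', ?_, ?_, by rw [he]; module⟩
      · rcases hg with h | h
        · exact Or.inl (S.face_smul hr h)
        · rw [h, smul_zero]; exact Or.inr rfl
      · rcases hg' with h | h
        · exact Or.inl (S.face_smul hr h)
        · rw [h, smul_zero]; exact Or.inr rfl

/-- Main closure membership criterion (claims A and B combined). -/
lemma mem_closure_halfspace (F₀ : S.Faces) (hF₀ : F₀.val = ({0} : Set A))
    {F : S.Faces} {Δ Y : Finset (Module.Dual ℝ A)} (hval : F.val = S.Face Δ Y)
    {u fs : A} (hfs : fs ∈ S.Face Δ Y) {t : ℝ} {a : Module.Dual ℝ A}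
    (hcase : 0 < a fs ∨ ((∀ x ∈ S.Face Δ Y, a x = 0) ∧ -t ≤ a u)) :
    S.mkAbar F u ∈ closure (S.mkAbar F₀ '' {z : A | -t ≤ a z}) := by
  classical
  rw [(S.abar_basis).mem_closure_iff]
  rintro o ⟨fam, ⟨hfin, hsub⟩, rfl⟩ hpo
  set CC : A → Prop := fun g => g ∈ S.Face Δ Y ∨ g = 0 with hCC
  have hCCadd : ∀ g h, CC g → CC h → CC (g + h) := by
    intro g h hg hh
    rcases hg with hg | hg
    · rcases hh with hh | hh
      · exact Or.inl (S.face_add_face hg hh)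
      · rw [hh, add_zero]; exact Or.inl hg
    · rw [hg, zero_add]; exact hh
  have hCC0 : CC 0 := Or.inr rfl
  have hper : ∀ s ∈ fam, ∃ d : A, CC d ∧
      ∀ e : A, CC e → S.mkAbar F₀ (u + d + e) ∈ s := by
    intro s hs
    obtain ⟨Fs, Us, hUo, hUb, hseq⟩ := hsub hs
    have hps : S.mkAbar F u ∈ s := Set.mem_sInter.mp hpo s hs
    rw [hseq] at hps ⊢
    rw [S.mem_gamma_iff] at hps
    obtain ⟨hFcl, us, hus, hspan⟩ := hps
    obtain ⟨v, hv, f1, hf1, hvf⟩ := Set.mem_add.mp hus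
    rw [hval] at hspan
    obtain ⟨g, g', hg, hg', hgg⟩ := S.span_face_decomp hspan
    refine ⟨g', hg', ?_⟩
    intro e he
    obtain ⟨Δs, Ys, hbs, hadms, hvals⟩ := Fs.2
    have hDD : ∀ z : A, CC z → z ∈ S.DDset Δs Ys := by
      intro z hz
      rcases hz with hz | hz
      · have hz2 : z ∈ closure Fs.val := hFcl (by rw [hval]; exact hz)
        rw [hvals] at hz2
        exact S.closure_face_subset Δs Ys hz2
      · rw [hz]; exact S.DDset_zero Δs Ys
    have hmemFs : f1 + (g + e) ∈ Fs.val := by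
      rw [hvals] at hf1 ⊢
      exact S.face_add_DD hf1 (S.DDset_add (hDD g hg) (hDD e he))
    have h3 : u = (g - g') + us := eq_add_of_sub_eq hgg
    have heq2 : u + g' + e = v + (f1 + (g + e)) := by
      rw [h3, ← hvf]; abel
    rw [S.mem_gamma_iff]
    constructor
    · rw [hF₀]
      intro z hz
      rw [Set.mem_singleton_iff] at hz
      subst hz
      rw [hvals]
      exact S.zero_mem_closure_face ⟨f1, by rw [← hvals]; exact hf1⟩
    · refine ⟨v + (f1 + (g + e)), Set.mem_add.mpr ⟨v, hv, _, hmemFs, rfl⟩, ?_⟩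
      rw [heq2]
      simp
  set D : Set S.Abar → A := fun s =>
    if h : ∃ d : A, CC d ∧ ∀ e : A, CC e → S.mkAbar F₀ (u + d + e) ∈ s
    then h.choose else 0 with hD
  have hDspec : ∀ s ∈ fam, CC (D s) ∧ ∀ e, CC e → S.mkAbar F₀ (u + D s + e) ∈ s := by
    intro s hs
    have h := hper s hs
    rw [hD]
    simp only [dif_pos h]
    exact h.choose_spec
  set fam' := hfin.toFinset with hfam'
  set G : A := ∑ s ∈ fam', D s with hG
  have hGCC : CC G :=
    Finset.sum_induction D CC hCCadd hCC0
      (fun s hs => (hDspec s (hfin.mem_toFinset.mp hs)).1)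
  obtain ⟨r, hr0, hrt⟩ : ∃ r : ℝ, 0 ≤ r ∧ -t ≤ a (u + G + r • fs) := by
    rcases hcase with hpos | ⟨hzero, hu⟩
    · refine ⟨max 0 ((-t - a u - a G)/(a fs)), le_max_left _ _, ?_⟩
      have h1 : (-t - a u - a G)/(a fs) ≤ max 0 ((-t - a u - a G)/(a fs)) :=
        le_max_right _ _
      rw [div_le_iff₀ hpos] at h1
      rw [map_add, map_add, map_smul, smul_eq_mul]
      linarith
    · refine ⟨0, le_rfl, ?_⟩
      have hG0 : a G = 0 := by
        rcases hGCC with h | h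
        · exact hzero G h
        · rw [h, map_zero]
      rw [map_add, map_add, map_smul, hG0, zero_smul, add_zero, add_zero]
      exact hu
  have hrfs : CC (r • fs) := by
    rcases eq_or_lt_of_le hr0 with h | h
    · exact Or.inr (by rw [← h, zero_smul])
    · exact Or.inl (S.face_smul h hfs)
  refine ⟨S.mkAbar F₀ (u + G + r • fs), Set.mem_inter (Set.mem_sInter.mpr ?_) ?_⟩
  · intro s hs
    have hs' : s ∈ fam' := hfin.mem_toFinset.mpr hs
    have h2 := (hDspec s hs).2 ((∑ s' ∈ fam'.erase s, D s') + r • fs)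
      (hCCadd _ _ (Finset.sum_induction D CC hCCadd hCC0
        (fun s' hs'' => (hDspec s' (hfin.mem_toFinset.mp (Finset.mem_of_mem_erase hs''))).1))
        hrfs)
    have h3 : u + G + r • fs = u + D s + ((∑ s' ∈ fam'.erase s, D s') + r • fs) := by
      rw [hG, ← Finset.add_sum_erase _ D hs']
      abel
    rw [h3]
    exact h2
  · exact ⟨u + G + r • fs, hrt, rfl⟩

end RootWeightSystem

end Aux14G
section Aux14H

namespace RootWeightSystem

open W14

variable {A : Type*} [NormedAddCommGroup A] [NormedSpace ℝ A] [FiniteDimensional ℝ A]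
variable (S : RootWeightSystem A)

lemma isFace_finite : {F : Set A | S.IsFace F}.Finite := by
  classical
  have h2 : {F : Set A | S.IsFace F} ⊆
      (fun q : Finset (Module.Dual ℝ A) × Module.Dual ℝ A × Finset (Module.Dual ℝ A) =>
        {x : A | (∀ b ∈ q.1, b x = 0) ∧ ∀ l ∈ q.2.2, 0 < (q.2.1 - l) x}) ''
        (↑(S.Φ.powerset ×ˢ S.Λ ×ˢ S.Λ.powerset) :
          Set (Finset (Module.Dual ℝ A) × Module.Dual ℝ A × Finset (Module.Dual ℝ A))) := by
    rintro F ⟨Δ, Y, hb, hadm, rfl⟩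
    refine ⟨(Y, S.lam0 Δ, S.Λ.filter fun l => ¬ supp Δ (S.lam0 Δ - l) ⊆ Y), ?_, ?_⟩
    · rw [Finset.mem_coe, Finset.mem_product, Finset.mem_product]
      refine ⟨Finset.mem_powerset.mpr
        (fun x hx => Finset.mem_coe.mp (hb.1 (Finset.mem_coe.mpr (hadm.1 hx)))), ?_, ?_⟩
      · exact S.lam0_mem Δ hb
      · exact Finset.mem_powerset.mpr (Finset.filter_subset _ _)
    · show {x : A | (∀ b ∈ Y, b x = 0) ∧
          ∀ l ∈ S.Λ.filter (fun l => ¬ supp Δ (S.lam0 Δ - l) ⊆ Y), 0 < (S.lam0 Δ - l) x}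
        = S.Face Δ Y
      ext x
      simp only [Set.mem_setOf_eq, Face, Finset.mem_filter]
      constructor
      · rintro ⟨h1, h2⟩
        exact ⟨h1, fun l hl hbad => h2 l ⟨hl, hbad⟩⟩
      · rintro ⟨h1, h2⟩
        exact ⟨h1, fun l hl => h2 l hl.1 hl.2⟩
  exact ((Set.toFinite _).image _).subset h2

instance : Finite S.Faces := (S.isFace_finite).to_subtype

end RootWeightSystem

end Aux14H

variable {A : Type*} [NormedAddCommGroup A] [NormedSpace ℝ A] [FiniteDimensional ℝ A]

/-- For non-empty `Ω ⊆ Ā` and a non-divisible root `a`, one has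
`f_Ω(a) = +∞` iff there is a face `F = F_Y^Δ` whose stratum meets `Ω` such that
either `a ∈ ⟨Y⟩` and `a(Ω ∩ A_F)` is unbounded from below, or `a ∉ ⟨Y⟩` and there
are `λ ∈ Λ` with `[λ₀(Δ) - λ] ⊆ Y` and a positive integer `l` with `λ + l·a ∈ Λ`. -/
theorem fOmega_eq_top_iff (S : RootWeightSystem A)
    (F₀ : S.Faces) (hF₀ : F₀.val = ({0} : Set A))
    (Ω : Set S.Abar) (hΩ : Ω.Nonempty)
    (a : Module.Dual ℝ A) (ha : a ∈ S.Φ) (hared : (2⁻¹ : ℝ) • a ∉ S.Φ) :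
    S.fOmega F₀ Ω a = ⊤ ↔
      ∃ (F : S.Faces) (Δ Y : Finset (Module.Dual ℝ A)),
        S.toRootWeightData.IsBase Δ ∧ S.toRootWeightData.Admissible Δ Y ∧
        F.val = S.Face Δ Y ∧ (∃ p ∈ Ω, ∃ u : A, p = S.mkAbar F u) ∧
        ((a ∈ Submodule.span ℝ ((Y : Set (Module.Dual ℝ A))) ∧
            ∀ M : ℝ, ∃ p ∈ Ω, ∃ u : A, p = S.mkAbar F u ∧ a u < M) ∨
          (a ∉ Submodule.span ℝ ((Y : Set (Module.Dual ℝ A))) ∧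
            ∃ l ∈ S.Λ, supp Δ (S.lam0 Δ - l) ⊆ Y ∧
              ∃ k : ℕ, 0 < k ∧ l + (k : ℝ) • a ∈ S.Λ)) := by
  classical
  have hiff : (S.fOmega F₀ Ω a = ⊤) ↔
      ∀ t : ℝ, ¬ Ω ⊆ closure (S.mkAbar F₀ '' {z : A | -t ≤ a z}) := by
    rw [RootWeightSystem.fOmega]
    constructor
    · intro h t hsub
      have h1 : ((t:EReal)) ∈ (fun t : ℝ => (t : EReal)) ''
          {t : ℝ | Ω ⊆ closure (S.mkAbar F₀ '' {z : A | -t ≤ a z})} := ⟨t, hsub, rfl⟩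
      have h2 := sInf_le h1
      rw [h] at h2
      exact EReal.coe_ne_top t (top_le_iff.mp h2)
    · intro h
      have he : {t : ℝ | Ω ⊆ closure (S.mkAbar F₀ '' {z : A | -t ≤ a z})} = ∅ :=
        Set.eq_empty_iff_forall_notMem.mpr h
      rw [he, Set.image_empty, sInf_empty]
  rw [hiff]
  constructor
  · -- hard direction
    intro hall
    by_contra hRHS
    set bnd : S.Faces → ℝ := fun F =>
      if h : ∃ M : ℝ, ∀ p ∈ Ω, ∀ u : A, p = S.mkAbar F u → M ≤ a u
      then -h.choose else 0 with hbnd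
    obtain ⟨t, ht⟩ : ∃ t : ℝ, ∀ F : S.Faces, bnd F ≤ t := by
      obtain ⟨t, ht⟩ := (Set.finite_range bnd).bddAbove
      exact ⟨t, fun F => ht ⟨F, rfl⟩⟩
    refine hall t ?_
    intro p hp
    obtain ⟨⟨F, u⟩, hrep⟩ := Quot.exists_rep p
    have hpeq : p = S.mkAbar F u := hrep.symm
    obtain ⟨Δ, Y, hb, hadm, hval⟩ := F.2
    obtain ⟨f₀, hf₀⟩ := S.face_nonempty hb hadm.1
    by_cases hsp : a ∈ Submodule.span ℝ (Y : Set (Module.Dual ℝ A))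
    · have hnotI : ∃ M : ℝ, ∀ p' ∈ Ω, ∀ u' : A, p' = S.mkAbar F u' → M ≤ a u' := by
        by_contra hM
        push_neg at hM
        exact hRHS ⟨F, Δ, Y, hb, hadm, hval, ⟨p, hp, u, hpeq⟩, Or.inl ⟨hsp, hM⟩⟩
      have hb1 : bnd F = -hnotI.choose := by
        rw [hbnd]
        simp only [dif_pos hnotI]
      have hM := hnotI.choose_spec p hp u hpeq
      have hta : -t ≤ a u := by
        have h3 := ht F
        rw [hb1] at h3
        linarith
      have hvanish : ∀ x ∈ S.Face Δ Y, a x = 0 := fun x hx => RootWeightSystem.span_vanish hsp hx.1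
      rw [hpeq]
      exact S.mem_closure_halfspace F₀ hF₀ hval hf₀ (Or.inr ⟨hvanish, hta⟩)
    · have hpos : ∃ fs ∈ S.Face Δ Y, 0 < a fs := by
        by_contra hnp
        push_neg at hnp
        obtain ⟨l, hl, hsupp, k, hk, hmem⟩ := S.heart hb hadm ha hsp hnp
        exact hRHS ⟨F, Δ, Y, hb, hadm, hval, ⟨p, hp, u, hpeq⟩,
          Or.inr ⟨hsp, l, hl, hsupp, k, hk, hmem⟩⟩
      obtain ⟨fs, hfs, hafs⟩ := hpos
      rw [hpeq]
      exact S.mem_closure_halfspace F₀ hF₀ hval hfs (Or.inl hafs)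
  · -- easy direction
    rintro ⟨F, Δ, Y, hb, hadm, hval, ⟨p₀, hp₀, u₀, hpu₀⟩, hcase⟩ t hsubset
    obtain ⟨f₀, hf₀⟩ := S.face_nonempty hb hadm.1
    have hf₀' : f₀ ∈ F.val := by rw [hval]; exact hf₀
    rcases hcase with ⟨hsp, hunb⟩ | ⟨hsp, l, hl, hsupp, k, hk, hmem⟩
    · -- case (i)
      obtain ⟨p, hp, u, hpeq, hau⟩ := hunb (-t - 1)
      have haf₀ : a f₀ = 0 := RootWeightSystem.span_vanish hsp hf₀.1
      set U : Set A := Metric.ball (u - f₀) 1 ∩ {v : A | a v < -t} with hU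
      have hUopen : IsOpen U := Metric.isOpen_ball.inter
        (isOpen_lt a.continuous_of_finiteDimensional continuous_const)
      have hUbdd : IsBounded U := Metric.isBounded_ball.subset Set.inter_subset_left
      have hcenter : u - f₀ ∈ U := by
        refine ⟨Metric.mem_ball_self one_pos, ?_⟩
        show a (u - f₀) < -t
        rw [map_sub, haf₀, sub_zero]
        linarith
      have hpΓ : p ∈ S.Gamma F U := by
        rw [hpeq, S.mem_gamma_iff]
        refine ⟨subset_closure,
          u, Set.mem_add.mpr ⟨u - f₀, hcenter, f₀, hf₀', by abel⟩, by simp⟩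
      have hdisj : ∀ q ∈ S.mkAbar F₀ '' {z : A | -t ≤ a z}, q ∉ S.Gamma F U := by
        rintro q ⟨z, hz, rfl⟩ hq
        rw [S.mem_gamma_iff] at hq
        obtain ⟨-, u', hu', hspan'⟩ := hq
        rw [hF₀, Submodule.span_zero_singleton] at hspan'
        have hz' : z = u' := by
          have h4 := (Submodule.mem_bot ℝ).mp hspan'
          exact sub_eq_zero.mp h4
        obtain ⟨v, hv, f', hf', hvf⟩ := Set.mem_add.mp hu'
        have hf'' : f' ∈ S.Face Δ Y := by rw [← hval]; exact hf'
        have haz : a z < -t := by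
          rw [hz', ← hvf, map_add, RootWeightSystem.span_vanish hsp hf''.1, add_zero]
          exact hv.2
        exact absurd hz (not_le.mpr haz)
      have himc : closure (S.mkAbar F₀ '' {z : A | -t ≤ a z}) ⊆ (S.Gamma F U)ᶜ :=
        closure_minimal (fun q hq => hdisj q hq)
          (S.gamma_isOpen hUopen hUbdd).isClosed_compl
      exact himc (hsubset hp) hpΓ
    · -- case (ii)
      have hkR : (0:ℝ) < (k:ℝ) := by exact_mod_cast hk
      have hface_neg : ∀ x ∈ S.Face Δ Y, a x < 0 := by
        intro x hx
        set l' := l + (k:ℝ) • a with hl'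
        obtain ⟨nn, hn0, hnrep⟩ := S.lam0_dominates Δ hb l hl
        have hvanl : (S.lam0 Δ - l) x = 0 :=
          RootWeightSystem.span_vanish (W14.mem_span_of_supp_subset ⟨nn, hnrep⟩ hsupp) hx.1
        obtain ⟨m, hmrep⟩ : ∃ m : Module.Dual ℝ A → ℝ, a = ∑ b ∈ Δ, m b • b := by
          rcases hb.2.2 a ha with ⟨n1, -, he⟩ | ⟨n1, -, he⟩
          · exact ⟨n1, he⟩
          · refine ⟨fun b => -(n1 b), ?_⟩
            rw [he, ← Finset.sum_neg_distrib]
            exact Finset.sum_congr rfl fun b _ => (neg_smul _ _).symm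
        have hb₁ex : ∃ b₁ ∈ Δ, b₁ ∉ Y ∧ m b₁ ≠ 0 := by
          by_contra hbc
          push_neg at hbc
          apply hsp
          rw [hmrep]
          refine Submodule.sum_mem _ fun b hbΔ => ?_
          by_cases hbY : b ∈ Y
          · exact Submodule.smul_mem _ _ (Submodule.subset_span hbY)
          · rw [hbc b hbΔ hbY, zero_smul]
            exact Submodule.zero_mem _
        obtain ⟨b₁, hb₁Δ, hb₁Y, hmb₁⟩ := hb₁ex
        have hrep' : S.lam0 Δ - l' = ∑ b ∈ Δ, (nn b - (k:ℝ) * m b) • b := by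
          have hdec : S.lam0 Δ - l' = (S.lam0 Δ - l) - (k:ℝ) • a := by
            rw [hl']; abel
          rw [hdec, hnrep, hmrep, Finset.smul_sum, ← Finset.sum_sub_distrib]
          refine Finset.sum_congr rfl fun b _ => ?_
          rw [smul_smul]
          exact (sub_smul (nn b) ((k:ℝ) * m b) b).symm
        have hco' : coeffs Δ (S.lam0 Δ - l') b₁ = nn b₁ - (k:ℝ) * m b₁ :=
          W14.coeffs_eq hb.2.1 hrep' hb₁Δ
        have hnnb₁ : nn b₁ = 0 := by
          have hcoe : coeffs Δ (S.lam0 Δ - l) b₁ = nn b₁ :=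
            W14.coeffs_eq hb.2.1 hnrep hb₁Δ
          by_contra hne
          exact hb₁Y (hsupp (Finset.mem_filter.mpr ⟨hb₁Δ, hcoe ▸ hne⟩))
        have hbad' : ¬ supp Δ (S.lam0 Δ - l') ⊆ Y := by
          intro hsub
          refine hb₁Y (hsub (Finset.mem_filter.mpr ⟨hb₁Δ, ?_⟩))
          rw [hco', hnnb₁, zero_sub]
          exact neg_ne_zero.mpr (mul_ne_zero (by positivity) hmb₁)
        have hpos' := hx.2 l' hmem hbad'
        have hdec2 : S.lam0 Δ - l' = (S.lam0 Δ - l) - (k:ℝ) • a := by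
          rw [hl']; abel
        rw [hdec2, LinearMap.sub_apply, hvanl, LinearMap.smul_apply, smul_eq_mul,
          zero_sub] at hpos'
        nlinarith
      have haf₀ : a f₀ < 0 := hface_neg f₀ hf₀
      set s := max 0 ((t + 1 + a u₀)/(-(a f₀))) with hs
      set c := u₀ + s • f₀ with hc
      have hac : a c ≤ -t - 1 := by
        have h1 : (t + 1 + a u₀)/(-(a f₀)) ≤ s := le_max_right _ _
        rw [div_le_iff₀ (by linarith : (0:ℝ) < -(a f₀))] at h1
        rw [hc, map_add, map_smul, smul_eq_mul]
        nlinarith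
      set U : Set A := Metric.ball c 1 ∩ {v : A | a v < -t} with hU
      have hUopen : IsOpen U := Metric.isOpen_ball.inter
        (isOpen_lt a.continuous_of_finiteDimensional continuous_const)
      have hUbdd : IsBounded U := Metric.isBounded_ball.subset Set.inter_subset_left
      have hcU : c ∈ U := ⟨Metric.mem_ball_self one_pos, by
        show a c < -t
        linarith⟩
      have hpΓ : p₀ ∈ S.Gamma F U := by
        rw [hpu₀, S.mem_gamma_iff]
        refine ⟨subset_closure, c + f₀,
          Set.mem_add.mpr ⟨c, hcU, f₀, hf₀', rfl⟩, ?_⟩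
        have h5 : u₀ - (c + f₀) = (-(s+1)) • f₀ := by
          rw [hc]
          module
        rw [h5]
        exact Submodule.smul_mem _ _ (Submodule.subset_span hf₀')
      have hdisj : ∀ q ∈ S.mkAbar F₀ '' {z : A | -t ≤ a z}, q ∉ S.Gamma F U := by
        rintro q ⟨z, hz, rfl⟩ hq
        rw [S.mem_gamma_iff] at hq
        obtain ⟨-, u', hu', hspan'⟩ := hq
        rw [hF₀, Submodule.span_zero_singleton] at hspan'
        have hz' : z = u' := sub_eq_zero.mp ((Submodule.mem_bot ℝ).mp hspan')
        obtain ⟨v, hv, f', hf', hvf⟩ := Set.mem_add.mp hu'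
        have hf'' : f' ∈ S.Face Δ Y := by rw [← hval]; exact hf'
        have haz : a z < -t := by
          rw [hz', ← hvf, map_add]
          have h6 := hface_neg f' hf''
          have h7 : a v < -t := hv.2
          linarith
        exact absurd hz (not_le.mpr haz)
      have himc : closure (S.mkAbar F₀ '' {z : A | -t ≤ a z}) ⊆ (S.Gamma F U)ᶜ :=
        closure_minimal (fun q hq => hdisj q hq)
          (S.gamma_isOpen hUopen hUbdd).isClosed_compl
      exact himc (hsubset hp₀) hpΓ
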